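/- (Claim 2, Step 1) Let n ≥ 3, let α ∈ ℝⁿ have strictly decreasing coordinates (α₁ > α₂ > ⋯ > αₙ), and let A be an n×n real matrix with all entries positive such that A *ᵥ (P *ᵥ α) ∼ A *ᵥ α for every n×n permutation matrix P. If every row of A is nonconstant (each row has at least two unequal entries), then every row of A takes exactly two distinct values, i.e. for each row i the set {A i 1, …, A i n} has cardinality exactly 2. -/

import Mathlib

open Matrix BigOperators

/-- A matrix is doubly stochastic: nonnegative entries, row sums and column sums all 1. -/
def IsDoublyStochastic {n : ℕ} (A : Matrix (Fin n) (Fin n) ℝ) : Prop :=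
  (∀ i j, 0 ≤ A i j) ∧ (∀ i, ∑ j, A i j = 1) ∧ (∀ j, ∑ i, A i j = 1)

/-- `Maj x y` means `x ≺ y`: `x` is majorized by `y`. -/
def Maj {n : ℕ} (x y : Fin n → ℝ) : Prop :=
  ∃ A : Matrix (Fin n) (Fin n) ℝ, IsDoublyStochastic A ∧ x = A *ᵥ y

/-- `MajEq x y` means `x ∼ y`: mutual majorization. -/
def MajEq {n : ℕ} (x y : Fin n → ℝ) : Prop := Maj x y ∧ Maj y x

/-- `P` is a permutation matrix. -/
def IsPermMatrix {n : ℕ} (P : Matrix (Fin n) (Fin n) ℝ) : Prop :=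
  ∃ σ : Equiv.Perm (Fin n), P = σ.permMatrix ℝ

/-- The increasing rearrangement `x↑` of a vector. -/
noncomputable def incSort {n : ℕ} (x : Fin n → ℝ) : Fin n → ℝ := x ∘ Tuple.sort x

/-- The decreasing rearrangement `x↓` of a vector. -/
noncomputable def decSort {n : ℕ} (x : Fin n → ℝ) : Fin n → ℝ :=
  fun i => (x ∘ Tuple.sort x) i.rev

/-! ### Auxiliary lemmas -/

lemma maj_abs_sum {n : ℕ} {x y : Fin n → ℝ} (h : Maj x y) (c : ℝ) :
    ∑ i, |x i - c| ≤ ∑ i, |y i - c| := by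
  obtain ⟨B, ⟨hB0, hBr, hBc⟩, rfl⟩ := h
  have h1 : ∀ i, (B *ᵥ y) i - c = ∑ j, B i j * (y j - c) := by
    intro i
    simp only [Matrix.mulVec, dotProduct, mul_sub, Finset.sum_sub_distrib,
      ← Finset.sum_mul, hBr i, one_mul]
  calc ∑ i, |(B *ᵥ y) i - c| = ∑ i, |∑ j, B i j * (y j - c)| := by
        simp only [h1]
    _ ≤ ∑ i, ∑ j, |B i j * (y j - c)| :=
        Finset.sum_le_sum fun i _ => Finset.abs_sum_le_sum_abs _ _
    _ = ∑ i, ∑ j, B i j * |y j - c| := by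
        simp only [abs_mul]
        refine Finset.sum_congr rfl fun i _ => Finset.sum_congr rfl fun j _ => ?_
        rw [abs_of_nonneg (hB0 i j)]
    _ = ∑ j, (∑ i, B i j) * |y j - c| := by
        rw [Finset.sum_comm]
        simp only [Finset.sum_mul]
    _ = ∑ j, |y j - c| := by simp only [hBc, one_mul]

lemma majEq_exists_eq {n : ℕ} {x y : Fin n → ℝ} (h : MajEq x y) (i0 : Fin n) :
    ∃ k, y k = x i0 := by
  by_contra hc
  push_neg at hc
  set v := x i0 with hv
  have habs : ∀ c : ℝ, ∑ i, |x i - c| = ∑ i, |y i - c| := fun c =>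
    le_antisymm (maj_abs_sum h.1 c) (maj_abs_sum h.2 c)
  have hne : (Finset.univ : Finset (Fin n)).Nonempty := ⟨i0, Finset.mem_univ _⟩
  set ε := Finset.univ.inf' hne (fun k => |y k - v|) with hεdef
  have hεle : ∀ k, ε ≤ |y k - v| := fun k => Finset.inf'_le _ (Finset.mem_univ k)
  have hε : 0 < ε := by
    rw [hεdef, Finset.lt_inf'_iff]
    intro k _
    exact abs_pos.mpr (sub_ne_zero.mpr (hc k))
  have hy : ∑ i, (|y i - (v - ε)| + |y i - (v + ε)| - 2 * |y i - v|) = 0 := by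
    refine Finset.sum_eq_zero fun k _ => ?_
    rcases le_abs.mp (hεle k) with h' | h'
    · rw [abs_of_nonneg (by linarith : (0:ℝ) ≤ y k - (v - ε)),
        abs_of_nonneg (by linarith : (0:ℝ) ≤ y k - (v + ε)),
        abs_of_nonneg (by linarith : (0:ℝ) ≤ y k - v)]
      ring
    · rw [abs_of_nonpos (by linarith : y k - (v - ε) ≤ 0),
        abs_of_nonpos (by linarith : y k - (v + ε) ≤ 0),
        abs_of_nonpos (by linarith : y k - v ≤ 0)]
      ring
  have hx : 2 * ε ≤ ∑ i, (|x i - (v - ε)| + |x i - (v + ε)| - 2 * |x i - v|) := by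
    have hterm : ∀ i : Fin n, (0:ℝ) ≤ |x i - (v - ε)| + |x i - (v + ε)| - 2 * |x i - v| := by
      intro i
      have h2 : 2 * |x i - v| = |(x i - (v - ε)) + (x i - (v + ε))| := by
        rw [show (x i - (v - ε)) + (x i - (v + ε)) = 2 * (x i - v) by ring, abs_mul, abs_two]
      have := abs_add_le (x i - (v - ε)) (x i - (v + ε))
      linarith [h2 ▸ this]
    have hi0 : |x i0 - (v - ε)| + |x i0 - (v + ε)| - 2 * |x i0 - v| = 2 * ε := by
      rw [← hv]
      rw [show v - (v - ε) = ε by ring, show v - (v + ε) = -ε by ring, sub_self,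
        abs_neg, abs_of_pos hε, abs_zero]
      ring
    calc (2:ℝ) * ε = |x i0 - (v - ε)| + |x i0 - (v + ε)| - 2 * |x i0 - v| := hi0.symm
      _ ≤ ∑ i, (|x i - (v - ε)| + |x i - (v + ε)| - 2 * |x i - v|) :=
        Finset.single_le_sum (fun i _ => hterm i) (Finset.mem_univ i0)
  have heq : ∑ i, (|x i - (v - ε)| + |x i - (v + ε)| - 2 * |x i - v|)
      = ∑ i, (|y i - (v - ε)| + |y i - (v + ε)| - 2 * |y i - v|) := by
    simp only [Finset.sum_sub_distrib, Finset.sum_add_distrib, habs, ← Finset.mul_sum]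
  rw [heq, hy] at hx
  linarith

def embPerm {n : ℕ} (k : Fin (n+1)) (τ : Equiv.Perm (Fin n)) : Equiv.Perm (Fin (n+1)) :=
  (finSuccEquiv' 0).trans ((Equiv.optionCongr τ).trans (finSuccEquiv' k).symm)

@[simp] lemma embPerm_zero {n : ℕ} (k : Fin (n+1)) (τ : Equiv.Perm (Fin n)) :
    embPerm k τ 0 = k := by
  simp [embPerm]

@[simp] lemma embPerm_succ {n : ℕ} (k : Fin (n+1)) (τ : Equiv.Perm (Fin n)) (j : Fin n) :
    embPerm k τ j.succ = k.succAbove (τ j) := by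
  have h1 : (finSuccEquiv' (0 : Fin (n+1))) j.succ = some j := by
    rw [← Fin.zero_succAbove]; exact finSuccEquiv'_succAbove _ _
  simp only [embPerm, Equiv.trans_apply, h1, Equiv.optionCongr_apply, Option.map_some,
    finSuccEquiv'_symm_some]

lemma sum_embPerm {n : ℕ} (w α : Fin (n+1) → ℝ) (k : Fin (n+1)) (τ : Equiv.Perm (Fin n)) :
    ∑ t, w t * α (embPerm k τ t) = w 0 * α k + ∑ j, w j.succ * α (k.succAbove (τ j)) := by
  rw [Fin.sum_univ_succ]
  simp

lemma succAbove_eq_of_ne {n : ℕ} (i : Fin n) (t : Fin n) (ht : t ≠ i) :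
    (Fin.castSucc i).succAbove t = i.succ.succAbove t := by
  rcases lt_or_gt_of_ne ht with h | h
  · rw [Fin.succAbove_of_castSucc_lt _ _ (by rwa [Fin.castSucc_lt_castSucc_iff]),
      Fin.succAbove_of_castSucc_lt _ _ (by rw [Fin.castSucc_lt_succ_iff]; exact h.le)]
  · rw [Fin.succAbove_of_le_castSucc _ _ (by rw [Fin.castSucc_le_castSucc_iff]; exact h.le),
      Fin.succAbove_of_le_castSucc _ _ (by rw [Fin.succ_le_castSucc_iff]; exact h)]

lemma muAux_strictAnti {n : ℕ} (α : Fin (n+1) → ℝ) (hα : StrictAnti α) (a : ℝ)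
    (v : Fin n → ℝ) (hv : ∀ t, v t < a) :
    StrictAnti (fun k : Fin (n+1) => a * α k + ∑ t, v t * α (k.succAbove t)) := by
  rw [Fin.strictAnti_iff_succ_lt]
  intro i
  have hdiff : (∑ t, v t * α ((Fin.castSucc i).succAbove t)) - ∑ t, v t * α (i.succ.succAbove t)
      = v i * (α i.succ - α (Fin.castSucc i)) := by
    rw [← Finset.sum_sub_distrib, Finset.sum_eq_single i]
    · rw [Fin.succAbove_castSucc_self, Fin.succAbove_succ_self]; ring
    · intro t _ ht
      rw [succAbove_eq_of_ne i t ht, sub_self]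
    · simp
  have key : 0 < (a - v i) * (α (Fin.castSucc i) - α i.succ) :=
    mul_pos (by linarith [hv i]) (by linarith [hα (Fin.castSucc_lt_succ : Fin.castSucc i < i.succ)])
  nlinarith [hdiff, key]

lemma sum_rev_lt {m : ℕ} (β u : Fin (m+1) → ℝ) (hβ : StrictAnti β) (hu : Monotone u)
    (hne : u 0 < u (Fin.last m)) :
    ∑ t, u t * β t < ∑ t, u t.rev * β t := by
  have hm : m ≠ 0 := by rintro rfl; exact absurd hne (by simp [Fin.last])
  have hlast : (0 : Fin (m+1)) < Fin.last m := by
    rw [Fin.lt_def]; simpa [Fin.last] using Nat.pos_of_ne_zero hm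
  have hD : 0 < ∑ t, (u t.rev - u t) * (β t - β t.rev) := by
    refine Finset.sum_pos' (fun t _ => ?_) ⟨0, Finset.mem_univ _, ?_⟩
    · rcases le_total t t.rev with h | h
      · have h1 : u t ≤ u t.rev := hu h
        have h2 : β t.rev ≤ β t := hβ.antitone h
        nlinarith
      · have h1 : u t.rev ≤ u t := hu h
        have h2 : β t ≤ β t.rev := hβ.antitone h
        nlinarith
    · have hrev0 : (0 : Fin (m+1)).rev = Fin.last m := by
        apply Fin.ext; simp [Fin.val_rev, Fin.last]
      rw [hrev0]
      exact mul_pos (by linarith) (by linarith [hβ hlast])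
  have hsplit : ∑ t, (u t.rev - u t) * β t + ∑ t, (u t.rev - u t) * β t
      = ∑ t, (u t.rev - u t) * (β t - β t.rev) := by
    nth_rewrite 2 [← Equiv.sum_comp (Fin.revPerm) (fun t => (u t.rev - u t) * β t)]
    rw [← Finset.sum_add_distrib]
    refine Finset.sum_congr rfl fun t _ => ?_
    simp only [Fin.revPerm_apply, Fin.rev_rev]
    ring
  have hgt : 0 < ∑ t, (u t.rev - u t) * β t := by linarith
  have hfin : ∑ t, (u t.rev - u t) * β t = (∑ t, u t.rev * β t) - ∑ t, u t * β t := by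
    rw [← Finset.sum_sub_distrib]; exact Finset.sum_congr rfl fun t _ => by ring
  linarith

noncomputable def sumsSet {n : ℕ} (α w : Fin n → ℝ) : Finset ℝ :=
  Finset.univ.image (fun σ : Equiv.Perm (Fin n) => ∑ t, w t * α (σ t))

lemma anti_lt {N : ℕ} (w : Fin (N+1) → ℝ) (hw : Antitone w) {a b : Fin (N+1)}
    (hab : w a ≠ w b) : w (Fin.last N) < w 0 := by
  rcases lt_or_ge (w (Fin.last N)) (w 0) with h | h
  · exact h
  have hconst : ∀ t, w t = w 0 := fun t =>
    le_antisymm (hw (Fin.zero_le t)) (le_trans h (hw (Fin.le_last t)))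
  exact absurd (by rw [hconst a, hconst b]) hab

lemma rev_zero' {N : ℕ} : (0 : Fin (N+1)).rev = Fin.last N := by
  apply Fin.ext; simp [Fin.val_rev, Fin.last]

lemma rev_last' {N : ℕ} : (Fin.last N).rev = (0 : Fin (N+1)) := by
  rw [← rev_zero', Fin.rev_rev]

lemma lemmaC {n : ℕ} (α w : Fin (n+1) → ℝ) (hα : StrictAnti α)
    (hv : ∀ j : Fin n, w j.succ < w 0) :
    ∃ μ : Fin (n+1) → ℝ, StrictAnti μ ∧ (∀ k, μ k ∈ sumsSet α w) ∧
      μ 0 = w 0 * α 0 + ∑ t : Fin n, w (t.rev.succ) * α t.succ := by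
  refine ⟨fun k => w 0 * α k + ∑ t, w (t.rev.succ) * α (k.succAbove t),
    muAux_strictAnti α hα _ _ (fun t => hv _), fun k => ?_, by simp⟩
  refine Finset.mem_image.mpr ⟨embPerm k Fin.revPerm, Finset.mem_univ _, ?_⟩
  rw [sum_embPerm]
  congr 1
  conv_rhs => rw [← Equiv.sum_comp Fin.revPerm (fun t => w (t.rev.succ) * α (k.succAbove t))]
  exact Finset.sum_congr rfl fun t _ => by simp [Fin.rev_rev]

lemma stepLemma {n : ℕ} (α w : Fin (n+2) → ℝ) (hα : StrictAnti α) (hw : Antitone w)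
    (hnc : w (Fin.last (n+1)) < w 0) :
    (sumsSet (fun j : Fin (n+1) => α j.succ) (fun j : Fin (n+1) => w j.succ)).card + 1
      ≤ (sumsSet α w).card := by
  set α' : Fin (n+1) → ℝ := fun j => α j.succ with hα'def
  set w' : Fin (n+1) → ℝ := fun j => w j.succ with hw'def
  set S' : Equiv.Perm (Fin (n+1)) → ℝ := fun τ => ∑ j, w' j * α' (τ j) with hS'def
  have hα' : StrictAnti α' := fun p q h => hα (Fin.strictMono_succ h)
  have hw' : Antitone w' := fun p q h => hw (Fin.strictMono_succ.monotone h)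
  have hfam : ∀ τ : Equiv.Perm (Fin (n+1)), (w 0 * α 0 + S' τ) ∈ sumsSet α w := by
    intro τ
    refine Finset.mem_image.mpr ⟨embPerm 0 τ, Finset.mem_univ _, ?_⟩
    rw [sum_embPerm]
    simp [hS'def, hα'def, hw'def, Fin.zero_succAbove]
  have hmin : ∀ τ : Equiv.Perm (Fin (n+1)), S' Fin.revPerm ≤ S' τ := by
    intro τ
    have hav : Antivary w' (fun j : Fin (n+1) => α' j.rev) := by
      intro p q hpq
      have h1 : q.rev < p.rev := hα'.lt_iff_gt.mp hpq
      exact hw' (Fin.rev_lt_rev.mp h1).le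
    have := hav.sum_mul_le_sum_mul_comp_perm (σ := τ.trans Fin.revPerm)
    simp only [hS'def]
    simpa [Fin.rev_rev, Fin.revPerm_apply] using this
  set σe : Equiv.Perm (Fin (n+2)) :=
    (embPerm 0 Fin.revPerm).trans (Equiv.swap 0 1) with hσe
  have h0 : σe 0 = 1 := by
    simp [hσe, Equiv.trans_apply]
  have hsucc : ∀ j : Fin (n+1), σe j.succ = Equiv.swap 0 1 (j.rev.succ) := by
    intro j
    simp [hσe, Equiv.trans_apply, Fin.zero_succAbove]
  have hswap_ne : ∀ j : Fin (n+1), j ≠ Fin.last n →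
      Equiv.swap (0 : Fin (n+2)) 1 (j.rev.succ) = j.rev.succ := by
    intro j hj
    apply Equiv.swap_apply_of_ne_of_ne
    · exact Fin.succ_ne_zero _
    · intro h
      apply hj
      have h2 : j.rev = 0 := by
        rw [← Fin.succ_zero_eq_one] at h
        exact Fin.succ_injective _ h
      rw [← Fin.rev_rev j, h2, rev_zero']
  have hdelta : (∑ j : Fin (n+1), w j.succ * α (Equiv.swap 0 1 (j.rev.succ)))
      - (∑ j : Fin (n+1), w j.succ * α (j.rev.succ))
      = w (Fin.last (n+1)) * (α 0 - α 1) := by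
    rw [← Finset.sum_sub_distrib, Finset.sum_eq_single (Fin.last n)]
    · rw [rev_last', Fin.succ_zero_eq_one, Equiv.swap_apply_right, Fin.succ_last]
      ring
    · intro j _ hj
      rw [hswap_ne j hj, sub_self]
    · simp
  have hS'rev : S' Fin.revPerm = ∑ j : Fin (n+1), w j.succ * α (j.rev.succ) := by
    simp [hS'def, hw'def, hα'def, Fin.revPerm_apply]
  have hE : ∑ t, w t * α (σe t)
      = (w 0 * α 0 + S' Fin.revPerm) - (w 0 - w (Fin.last (n+1))) * (α 0 - α 1) := by
    rw [Fin.sum_univ_succ, h0]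
    simp only [hsucc]
    rw [hS'rev]
    linarith [hdelta]
  have h01 : (0 : Fin (n+2)) < 1 := by
    rw [Fin.lt_def]; simp
  have hElt : ∀ τ : Equiv.Perm (Fin (n+1)), ∑ t, w t * α (σe t) < w 0 * α 0 + S' τ := by
    intro τ
    have hpos : 0 < (w 0 - w (Fin.last (n+1))) * (α 0 - α 1) :=
      mul_pos (by linarith) (by linarith [hα h01])
    have := hmin τ
    linarith [hE]
  have hEmem : (∑ t, w t * α (σe t)) ∈ sumsSet α w :=
    Finset.mem_image.mpr ⟨σe, Finset.mem_univ _, rfl⟩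
  have himg : Finset.image (fun z => w 0 * α 0 + z) (sumsSet α' w') ⊆ sumsSet α w := by
    intro x hx
    obtain ⟨z, hz, rfl⟩ := Finset.mem_image.mp hx
    obtain ⟨τ, _, rfl⟩ := Finset.mem_image.mp hz
    exact hfam τ
  have hEnot : (∑ t, w t * α (σe t)) ∉
      Finset.image (fun z => w 0 * α 0 + z) (sumsSet α' w') := by
    intro hmem
    obtain ⟨z, hz, hzE⟩ := Finset.mem_image.mp hmem
    obtain ⟨τ, _, rfl⟩ := Finset.mem_image.mp hz
    exact absurd hzE (ne_of_gt (hElt τ))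
  calc (sumsSet α' w').card + 1
      = (insert (∑ t, w t * α (σe t))
          (Finset.image (fun z => w 0 * α 0 + z) (sumsSet α' w'))).card := by
        rw [Finset.card_insert_of_notMem hEnot,
          Finset.card_image_of_injective _ (add_right_injective _)]
    _ ≤ (sumsSet α w).card :=
        Finset.card_le_card (Finset.insert_subset hEmem himg)

lemma K3 : ∀ (n : ℕ) (α w : Fin n → ℝ), StrictAnti α → Antitone w →
    (∃ i j k, w i ≠ w j ∧ w i ≠ w k ∧ w j ≠ w k) →
    n + 1 ≤ (sumsSet α w).card := by
  intro n
  induction n using Nat.strong_induction_on with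
  | _ n IH =>
    intro α w hα hw h3
    obtain ⟨i, j, k, hij, hik, hjk⟩ := h3
    have hij' : i ≠ j := fun h => hij (congrArg w h)
    have hik' : i ≠ k := fun h => hik (congrArg w h)
    have hjk' : j ≠ k := fun h => hjk (congrArg w h)
    have hcard3 : ({i, j, k} : Finset (Fin n)).card = 3 := by
      rw [Finset.card_insert_of_notMem (by simp [hij', hik']), Finset.card_pair hjk']
    have h3n : 3 ≤ n := by
      have h := Finset.card_le_univ ({i, j, k} : Finset (Fin n))
      rwa [hcard3, Fintype.card_fin] at h
    obtain ⟨m, rfl⟩ : ∃ m, n = m + 2 := ⟨n - 2, by omega⟩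
    have hα' : StrictAnti (fun t : Fin (m+1) => α t.succ) :=
      fun p q h => hα (Fin.strictMono_succ h)
    have hw' : Antitone (fun t : Fin (m+1) => w t.succ) :=
      fun p q h => hw (Fin.strictMono_succ.monotone h)
    obtain ⟨a, b, ha, hb, hab⟩ :
        ∃ a b : Fin (m+2), w a ≠ w 0 ∧ w b ≠ w 0 ∧ w a ≠ w b := by
      by_cases h1 : w i = w 0
      · exact ⟨j, k, by rw [← h1]; exact fun h => hij h.symm,
          by rw [← h1]; exact fun h => hik h.symm, hjk⟩
      · by_cases h2 : w j = w 0
        · exact ⟨i, k, h1, by rw [← h2]; exact fun h => hjk h.symm, hik⟩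
        · exact ⟨i, j, h1, h2, hij⟩
    obtain ⟨a', ha'⟩ := Fin.exists_succ_eq.mpr (show a ≠ 0 from fun h => ha (by rw [h]))
    obtain ⟨b', hb'⟩ := Fin.exists_succ_eq.mpr (show b ≠ 0 from fun h => hb (by rw [h]))
    have hab' : w a'.succ ≠ w b'.succ := by rw [ha', hb']; exact hab
    by_cases h3' : ∃ p q s : Fin (m+1),
        w p.succ ≠ w q.succ ∧ w p.succ ≠ w s.succ ∧ w q.succ ≠ w s.succ
    · -- use induction hypothesis plus the step lemma
      have hnc : w (Fin.last (m+1)) < w 0 := anti_lt w hw hab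
      have hIH := IH (m+1) (by omega) (fun t : Fin (m+1) => α t.succ)
        (fun t : Fin (m+1) => w t.succ) hα' hw' h3'
      have hstep := stepLemma α w hα hw hnc
      linarith [hIH, hstep]
    · -- all entries below the top one are strictly smaller
      have hvlt : ∀ t : Fin (m+1), w t.succ < w 0 := by
        intro t
        rcases lt_or_ge (w t.succ) (w 0) with h | h
        · exact h
        have heq : w t.succ = w 0 := le_antisymm (hw (Fin.zero_le _)) h
        exact absurd ⟨a', b', t, hab',
          by rw [ha', heq]; exact ha, by rw [hb', heq]; exact hb⟩ h3'
      obtain ⟨μ, hμanti, hμmem, hμ0⟩ := lemmaC α w hα hvlt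
      have hwlast1 : w (Fin.last (m+1)) < w ((0 : Fin (m+1)).succ) := by
        have := anti_lt (fun t : Fin (m+1) => w t.succ) hw' hab'
        simpa [Fin.succ_last] using this
      have hgt : μ 0 < ∑ t, w t * α t := by
        have hmono : Monotone (fun t : Fin (m+1) => w t.rev.succ) := by
          intro p q hpq
          exact hw (Fin.strictMono_succ.monotone (Fin.rev_le_rev.mpr hpq))
        have hne : w ((0 : Fin (m+1)).rev.succ) < w ((Fin.last m).rev.succ) := by
          rw [rev_zero', rev_last', Fin.succ_last]
          exact hwlast1
        have hkey := sum_rev_lt (fun t : Fin (m+1) => α t.succ)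
          (fun t : Fin (m+1) => w t.rev.succ) hα' hmono hne
        have hrw : ∑ t : Fin (m+1), w t.rev.rev.succ * α t.succ
            = ∑ t : Fin (m+1), w t.succ * α t.succ := by
          simp [Fin.rev_rev]
        rw [hrw] at hkey
        have hexp : ∑ t : Fin (m+2), w t * α t
            = w 0 * α 0 + ∑ t : Fin (m+1), w t.succ * α t.succ :=
          Fin.sum_univ_succ (fun t => w t * α t)
        rw [hμ0, hexp]
        linarith [hkey]
      have hS1mem : (∑ t, w t * α t) ∈ sumsSet α w :=
        Finset.mem_image.mpr ⟨1, Finset.mem_univ _, by simp⟩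
      have hμlt : ∀ kk, μ kk < ∑ t, w t * α t := fun kk =>
        lt_of_le_of_lt (hμanti.antitone (Fin.zero_le kk)) hgt
      have hnotmem : (∑ t, w t * α t) ∉ Finset.image μ Finset.univ := by
        intro hmem'
        obtain ⟨kk, _, hkk⟩ := Finset.mem_image.mp hmem'
        exact absurd hkk (ne_of_lt (hμlt kk))
      have hsubs : insert (∑ t, w t * α t) (Finset.image μ Finset.univ) ⊆ sumsSet α w :=
        Finset.insert_subset hS1mem (fun x hx => by
          obtain ⟨kk, _, rfl⟩ := Finset.mem_image.mp hx; exact hμmem kk)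
      have hcards := Finset.card_le_card hsubs
      rwa [Finset.card_insert_of_notMem hnotmem,
        Finset.card_image_of_injective _ hμanti.injective, Finset.card_univ,
        Fintype.card_fin] at hcards

lemma mulVec_permMatrix {n : ℕ} (σ : Equiv.Perm (Fin n)) (α : Fin n → ℝ) (j : Fin n) :
    ((σ.permMatrix ℝ) *ᵥ α) j = α (σ j) := by
  simp [Matrix.mulVec, dotProduct, Equiv.Perm.permMatrix, PEquiv.toMatrix_apply,
    Equiv.toPEquiv_apply, Option.mem_def, ite_mul, one_mul, zero_mul, Finset.sum_ite_eq']

/-- Claim 2, Step 1: if every row of `A` is nonconstant, then every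
row of `A` takes exactly two distinct values. -/
theorem rows_take_two_values {n : ℕ} (hn : 3 ≤ n) (α : Fin n → ℝ) (hα : StrictAnti α)
    (A : Matrix (Fin n) (Fin n) ℝ) (hpos : ∀ i j, 0 < A i j)
    (hA : ∀ P : Matrix (Fin n) (Fin n) ℝ, IsPermMatrix P →
      MajEq (A *ᵥ (P *ᵥ α)) (A *ᵥ α))
    (hrow : ∀ i : Fin n, ∃ j j' : Fin n, A i j ≠ A i j') :
    ∀ i : Fin n, (Finset.univ.image (A i)).card = 2 := by
  intro i
  obtain ⟨j, j', hjj⟩ := hrow i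
  have h2le : 2 ≤ (Finset.univ.image (A i)).card := by
    have hsub : ({A i j, A i j'} : Finset ℝ) ⊆ Finset.univ.image (A i) := by
      intro x hx
      rcases Finset.mem_insert.mp hx with h | h
      · exact Finset.mem_image.mpr ⟨j, Finset.mem_univ _, h.symm⟩
      · exact Finset.mem_image.mpr ⟨j', Finset.mem_univ _,
          (Finset.mem_singleton.mp h).symm⟩
    calc 2 = ({A i j, A i j'} : Finset ℝ).card := (Finset.card_pair hjj).symm
      _ ≤ _ := Finset.card_le_card hsub
  by_contra hne2
  have h3le : 3 ≤ (Finset.univ.image (A i)).card := by omega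
  obtain ⟨v1, hv1, v2, hv2, hv12⟩ := Finset.one_lt_card.mp
    (show 1 < (Finset.univ.image (A i)).card by omega)
  have hv2e : v2 ∈ (Finset.univ.image (A i)).erase v1 :=
    Finset.mem_erase.mpr ⟨hv12.symm, hv2⟩
  have hcard_er : 1 ≤ (((Finset.univ.image (A i)).erase v1).erase v2).card := by
    rw [Finset.card_erase_of_mem hv2e, Finset.card_erase_of_mem hv1]
    omega
  obtain ⟨v3, hv3s⟩ := Finset.card_pos.mp
    (show 0 < (((Finset.univ.image (A i)).erase v1).erase v2).card by omega)
  have hv3 : v3 ∈ Finset.univ.image (A i) :=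
    Finset.mem_of_mem_erase (Finset.mem_of_mem_erase hv3s)
  have hv32 : v3 ≠ v2 := Finset.ne_of_mem_erase hv3s
  have hv31 : v3 ≠ v1 := Finset.ne_of_mem_erase (Finset.mem_of_mem_erase hv3s)
  obtain ⟨j1, _, hj1⟩ := Finset.mem_image.mp hv1
  obtain ⟨j2, _, hj2⟩ := Finset.mem_image.mp hv2
  obtain ⟨j3, _, hj3⟩ := Finset.mem_image.mp hv3
  set r : Fin n → ℝ := A i with hr
  set π := Tuple.sort r with hπ
  set w : Fin n → ℝ := fun t => r (π t.rev) with hwdef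
  have hwanti : Antitone w := by
    intro s t hst
    exact Tuple.monotone_sort r (Fin.rev_le_rev.mpr hst)
  have hw3 : ∃ p q s : Fin n, w p ≠ w q ∧ w p ≠ w s ∧ w q ≠ w s := by
    refine ⟨(π.symm j1).rev, (π.symm j2).rev, (π.symm j3).rev, ?_, ?_, ?_⟩ <;>
      simp only [hwdef, Fin.rev_rev, Equiv.apply_symm_apply, hj1, hj2, hj3]
    · exact hv12
    · exact fun h => hv31 h.symm
    · exact fun h => hv32 h.symm
  have hK3 := K3 n α w hα hwanti hw3
  have hsub : sumsSet α w ⊆ Finset.univ.image (A *ᵥ α) := by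
    intro z hz
    rw [sumsSet, Finset.mem_image] at hz
    obtain ⟨σ, _, rfl⟩ := hz
    set e : Equiv.Perm (Fin n) := Fin.revPerm.trans π with he
    set σ' : Equiv.Perm (Fin n) := e.symm.trans σ with hσ'
    have hsum : ∑ t, w t * α (σ t) = ∑ s, r s * α (σ' s) := by
      conv_rhs => rw [← Equiv.sum_comp e (fun s => r s * α (σ' s))]
      refine Finset.sum_congr rfl fun t _ => ?_
      have het : e.symm (π t.rev) = t := by
        have h1 : π t.rev = e t := rfl
        rw [h1, Equiv.symm_apply_apply]
      show w t * α (σ t) = r (π t.rev) * α (σ (e.symm (π t.rev)))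
      rw [het]
    rw [hsum]
    have hmaj := hA (σ'.permMatrix ℝ) ⟨σ', rfl⟩
    obtain ⟨kk, hkk⟩ := majEq_exists_eq hmaj i
    refine Finset.mem_image.mpr ⟨kk, Finset.mem_univ _, ?_⟩
    rw [hkk]
    have hPv : (σ'.permMatrix ℝ) *ᵥ α = fun s => α (σ' s) := funext (mulVec_permMatrix σ' α)
    rw [hPv]
    simp only [Matrix.mulVec, dotProduct]
    rfl
  have hub : (Finset.univ.image (A *ᵥ α)).card ≤ n :=
    le_trans Finset.card_image_le (by simp)
  have := Finset.card_le_card hsub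
  omega
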